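/- Let P_n = p_1 p_2 ⋯ p_n denote the n-th primorial. Then φ̄(P_n) = ∏_{i=1}^{n} (1 - 1/p_i) and lim_{n→∞} φ̄(P_n) = 0 (limit taken in ℝ). -/

import Mathlib

open Finset Filter

/-- `φ̄ n = φ n / n`, as a rational-valued function. -/
def phiBar (n : ℕ) : ℚ := (Nat.totient n : ℚ) / n

/-- The sequence of primes in increasing order (0-indexed:
`nthPrime 0 = 2`, `nthPrime 1 = 3`, ...). -/
noncomputable def nthPrime (n : ℕ) : ℕ := Nat.nth Nat.Prime n

/-- The `n`-th primorialSeq `P n = p_1 * p_2 * ⋯ * p_n`. -/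
noncomputable def primorialSeq (n : ℕ) : ℕ := ∏ i ∈ Finset.range n, nthPrime i

lemma nthPrime_prime (n : ℕ) : (nthPrime n).Prime :=
  Nat.nth_mem_of_infinite Nat.infinite_setOf_prime n

lemma primorialSeq_pos (n : ℕ) : 0 < primorialSeq n :=
  Finset.prod_pos fun i _ => (nthPrime_prime i).pos

lemma coprime_primorial (n : ℕ) : Nat.Coprime (primorialSeq n) (nthPrime n) := by
  rw [Nat.coprime_comm]
  refine (Nat.Prime.coprime_iff_not_dvd (nthPrime_prime n)).mpr ?_
  intro hdvd
  obtain ⟨i, hi, hd⟩ := (Nat.Prime.prime (nthPrime_prime n)).exists_mem_finset_dvd hdvd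
  have : nthPrime n = nthPrime i :=
    ((Nat.prime_dvd_prime_iff_eq (nthPrime_prime n) (nthPrime_prime i)).mp hd)
  have h := Nat.nth_injective Nat.infinite_setOf_prime this
  rw [← h] at hi
  exact lt_irrefl n (Finset.mem_range.mp hi)

lemma part1 (n : ℕ) : phiBar (primorialSeq n) =
    ∏ i ∈ Finset.range n, (1 - 1 / (nthPrime i : ℚ)) := by
  induction n with
  | zero => simp [phiBar, primorialSeq]
  | succ n ih =>
    have hp := nthPrime_prime n
    have hP := primorialSeq_pos n
    have hstep : primorialSeq (n + 1) = primorialSeq n * nthPrime n := by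
      rw [primorialSeq, Finset.prod_range_succ]; rfl
    rw [Finset.prod_range_succ, ← ih, phiBar, phiBar, hstep,
      Nat.totient_mul (coprime_primorial n), Nat.totient_prime hp]
    have h1 : (primorialSeq n : ℚ) ≠ 0 := by exact_mod_cast hP.ne'
    have h2 : (nthPrime n : ℚ) ≠ 0 := by exact_mod_cast hp.pos.ne'
    push_cast [Nat.cast_sub hp.one_lt.le]
    field_simp

theorem sylvester_stmt13 :
    (∀ n : ℕ, phiBar (primorialSeq n) =
      ∏ i ∈ Finset.range n, (1 - 1 / (nthPrime i : ℚ))) ∧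
    Tendsto (fun n => ((phiBar (primorialSeq n) : ℚ) : ℝ)) atTop (nhds 0) := by
  refine ⟨part1, ?_⟩
  have heq : ∀ n, ((phiBar (primorialSeq n) : ℚ) : ℝ)
      = ∏ i ∈ Finset.range n, (1 - 1 / (nthPrime i : ℝ)) := by
    intro n
    rw [part1 n]
    push_cast
    rfl
  -- divergence of sum of reciprocals of primes
  have hnonneg : ∀ i, (0 : ℝ) ≤ 1 / (nthPrime i : ℝ) := fun i => by positivity
  have hnotsum : ¬ Summable (fun i : ℕ => (1 / (nthPrime i : ℝ))) := by
    intro hs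
    apply Nat.Primes.not_summable_one_div
    let e : ℕ ≃ Nat.Primes :=
      Equiv.ofBijective (fun i => ⟨nthPrime i, nthPrime_prime i⟩)
        ⟨fun a b hab => Nat.nth_injective Nat.infinite_setOf_prime (congrArg Subtype.val hab),
         fun p => ⟨Nat.count Nat.Prime p, Subtype.ext (Nat.nth_count p.prop)⟩⟩
    have : (fun p : Nat.Primes => (1 / (p : ℝ))) ∘ e = fun i => 1 / (nthPrime i : ℝ) := rfl
    exact (e.summable_iff).mp (this ▸ hs)
  have hdiv : Tendsto (fun n => ∑ i ∈ Finset.range n, (1 / (nthPrime i : ℝ))) atTop atTop :=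
    (not_summable_iff_tendsto_nat_atTop_of_nonneg hnonneg).mp hnotsum
  -- squeeze: 0 ≤ ∏ (1 - 1/p_i) ≤ exp (-∑ 1/p_i) → 0
  have hfac_nonneg : ∀ i, (0 : ℝ) ≤ 1 - 1 / (nthPrime i : ℝ) := by
    intro i
    have h2 : (2 : ℝ) ≤ (nthPrime i : ℝ) := by exact_mod_cast (nthPrime_prime i).two_le
    have : 1 / (nthPrime i : ℝ) ≤ 1 := by
      rw [div_le_one (by linarith)]; linarith
    linarith
  have hub : ∀ n, ∏ i ∈ Finset.range n, (1 - 1 / (nthPrime i : ℝ))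
      ≤ Real.exp (-(∑ i ∈ Finset.range n, (1 / (nthPrime i : ℝ)))) := by
    intro n
    calc ∏ i ∈ Finset.range n, (1 - 1 / (nthPrime i : ℝ))
        ≤ ∏ i ∈ Finset.range n, Real.exp (-(1 / (nthPrime i : ℝ))) := by
          refine Finset.prod_le_prod (fun i _ => hfac_nonneg i) (fun i _ => ?_)
          have := Real.add_one_le_exp (-(1 / (nthPrime i : ℝ)))
          linarith
      _ = Real.exp (∑ i ∈ Finset.range n, -(1 / (nthPrime i : ℝ))) := (Real.exp_sum _ _).symm
      _ = Real.exp (-(∑ i ∈ Finset.range n, (1 / (nthPrime i : ℝ)))) := by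
          rw [Finset.sum_neg_distrib]
  have hexp : Tendsto (fun n => Real.exp (-(∑ i ∈ Finset.range n, (1 / (nthPrime i : ℝ)))))
      atTop (nhds 0) :=
    Real.tendsto_exp_atBot.comp (tendsto_neg_atBot_iff.mpr hdiv)
  have hlb : ∀ n, (0 : ℝ) ≤ ∏ i ∈ Finset.range n, (1 - 1 / (nthPrime i : ℝ)) :=
    fun n => Finset.prod_nonneg fun i _ => hfac_nonneg i
  simp only [heq]
  exact squeeze_zero hlb hub hexp
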